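/- The normed dual functor turns covering norm-1 direct limits into inverse limits: let (X, (i_n)) be a covering norm-1 direct limit of a direct sequence (X_n, i_{n,n+1}) of normed spaces over 𝕜. Then for every family of continuous linear functionals φ_n ∈ D(X_n) satisfying φ_{n+1} ∘ i_{n,n+1} = φ_n for all n and sup_n ‖φ_n‖ < ∞, there exists a unique φ ∈ D(X) with φ ∘ i_n = φ_n for all n, and ‖φ‖ = sup_n ‖φ_n‖. -/
import Mathlib


/-!
STATEMENT 7: The normed dual functor turns covering norm-1 direct limits into inverse limits:
if `(X, (i_n))` is a covering norm-1 direct limit of the direct sequence `(X_n, i_{n,n+1})`,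
then every uniformly bounded compatible family of functionals `φ_n ∈ D(X_n)` extends uniquely
to a functional `φ ∈ D(X)` with `φ ∘ i_n = φ_n`, and `‖φ‖ = sup_n ‖φ_n‖`.
-/

universe u

structure NSpace (𝕜 : Type u) [NontriviallyNormedField 𝕜] where
  carrier : Type u
  [grp : NormedAddCommGroup carrier]
  [mod : NormedSpace 𝕜 carrier]

attribute [instance] NSpace.grp NSpace.mod

variable (𝕜 : Type u) [RCLike 𝕜]

/-- `(L, (i_n))` is a norm-1 direct limit of the direct sequence `(Xs, b)`:
the `i_n` are compatible isometries and every compatible family of maps of norm `≤ 1`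
into a normed space `Y` factors uniquely through `L`, the factorization having norm `≤ 1`. -/
def IsDirLimit (Xs : ℕ → NSpace 𝕜)
    (b : ∀ n : ℕ, (Xs n).carrier →L[𝕜] (Xs (n + 1)).carrier)
    (L : Type u) [NormedAddCommGroup L] [NormedSpace 𝕜 L]
    (i : ∀ n : ℕ, (Xs n).carrier →L[𝕜] L) : Prop :=
  (∀ n, Isometry (i n)) ∧
  (∀ n x, i (n + 1) (b n x) = i n x) ∧
  (∀ (Y : Type u) [NormedAddCommGroup Y] [NormedSpace 𝕜 Y]
      (f : ∀ n : ℕ, (Xs n).carrier →L[𝕜] Y),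
      (∀ n, ‖f n‖ ≤ 1) →
      (∀ n x, f (n + 1) (b n x) = f n x) →
      (∃! F : L →L[𝕜] Y, ∀ n x, F (i n x) = f n x) ∧
        ∀ F : L →L[𝕜] Y, (∀ n x, F (i n x) = f n x) → ‖F‖ ≤ 1)

theorem dual_of_dirLimit (Xs : ℕ → NSpace 𝕜)
    (b : ∀ n : ℕ, (Xs n).carrier →L[𝕜] (Xs (n + 1)).carrier)
    (hb : ∀ n, Isometry (b n))
    (L : Type u) [NormedAddCommGroup L] [NormedSpace 𝕜 L]
    (i : ∀ n : ℕ, (Xs n).carrier →L[𝕜] L)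
    (hlim : IsDirLimit 𝕜 Xs b L i)
    (hcov : ∀ x : L, ∃ n y, i n y = x)
    (φ : ∀ n : ℕ, (Xs n).carrier →L[𝕜] 𝕜)
    (hcomp : ∀ n x, φ (n + 1) (b n x) = φ n x)
    (hbdd : BddAbove (Set.range fun n => ‖φ n‖)) :
    (∃! Φ : L →L[𝕜] 𝕜, ∀ n x, Φ (i n x) = φ n x) ∧
      ∀ Φ : L →L[𝕜] 𝕜, (∀ n x, Φ (i n x) = φ n x) → ‖Φ‖ = ⨆ n, ‖φ n‖ := by
  set M : ℝ := ⨆ n, ‖φ n‖ with hMdef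
  have hM : ∀ n, ‖φ n‖ ≤ M := fun n => le_ciSup hbdd n
  have hM0 : 0 ≤ M := le_trans (norm_nonneg _) (hM 0)
  have hM1 : (0 : ℝ) < M + 1 := by linarith
  have hM1' : ((M + 1 : ℝ) : 𝕜) ≠ 0 := by
    rw [Ne, RCLike.ofReal_eq_zero]
    exact ne_of_gt hM1
  -- scaled family of norm ≤ 1
  set f : ∀ n : ℕ, (Xs n).carrier →L[𝕜] 𝕜 :=
    fun n => ((M + 1 : ℝ) : 𝕜)⁻¹ • φ n with hfdef
  have hnormc : ‖((M + 1 : ℝ) : 𝕜)‖ = M + 1 := by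
    rw [RCLike.norm_ofReal, abs_of_pos hM1]
  have hf1 : ∀ n, ‖f n‖ ≤ 1 := by
    intro n
    show ‖((M + 1 : ℝ) : 𝕜)⁻¹ • φ n‖ ≤ 1
    calc ‖((M + 1 : ℝ) : 𝕜)⁻¹ • φ n‖ ≤ ‖((M + 1 : ℝ) : 𝕜)⁻¹‖ * ‖φ n‖ :=
          ContinuousLinearMap.opNorm_smul_le _ _
      _ ≤ 1 := by
          rw [norm_inv, hnormc, inv_mul_le_iff₀ hM1, mul_one]
          linarith [hM n]
  have hf2 : ∀ n x, f (n + 1) (b n x) = f n x := by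
    intro n x
    simp [hfdef, hcomp n x]
  obtain ⟨⟨F, hF, -⟩, -⟩ := hlim.2.2 𝕜 f hf1 hf2
  have hiso := hlim.1
  have hinorm : ∀ n (x : (Xs n).carrier), ‖i n x‖ = ‖x‖ := fun n x =>
    (hiso n).norm_map_of_map_zero (map_zero _) x
  refine ⟨⟨((M + 1 : ℝ) : 𝕜) • F, ?_, ?_⟩, ?_⟩
  · intro n x
    have := hF n x
    simp only [hfdef, ContinuousLinearMap.smul_apply] at this ⊢
    rw [this, smul_smul, mul_inv_cancel₀ hM1', one_smul]
  · intro Φ hΦ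
    ext x
    obtain ⟨n, y, rfl⟩ := hcov x
    rw [hΦ n y]
    simp only [ContinuousLinearMap.smul_apply]
    have := hF n y
    rw [this]
    simp only [hfdef, ContinuousLinearMap.smul_apply, smul_eq_mul]
    rw [← mul_assoc, mul_inv_cancel₀ hM1', one_mul]
  · intro Φ hΦ
    apply le_antisymm
    · apply ContinuousLinearMap.opNorm_le_bound _ hM0
      intro x
      obtain ⟨n, y, rfl⟩ := hcov x
      rw [hΦ n y, hinorm n y]
      calc ‖φ n y‖ ≤ ‖φ n‖ * ‖y‖ := (φ n).le_opNorm y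
        _ ≤ M * ‖y‖ := by
          apply mul_le_mul_of_nonneg_right (hM n) (norm_nonneg _)
    · apply ciSup_le
      intro n
      apply ContinuousLinearMap.opNorm_le_bound _ (norm_nonneg Φ)
      intro x
      rw [← hΦ n x, ← hinorm n x]
      exact Φ.le_opNorm _
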